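/- Let z ∈ ℂⁿ with unit-modulus entries, W Hermitian, σ ≥ 0, ℒx = (z*x/n)z + (σ/n)Wx. Suppose ε ∈ (0, 1/2) and x, y ∈ ℂⁿ with ‖x‖₂ = ‖y‖₂ = √n, d₂(x, z) ≤ ε√n, and d₂(y, z) ≤ ε√n. Then d₂(ℒx, ℒy) ≤ (6ε + σ‖W‖₂/n) d₂(x, y). -/

import Mathlib

noncomputable section

namespace PhaseSync

open Complex

variable {n : ℕ}

/-- Euclidean (ℓ²) norm on `Fin n → ℂ`. -/
def l2norm (v : Fin n → ℂ) : ℝ :=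
  Real.sqrt (∑ k, ‖v k‖ ^ 2)

/-- Entrywise sup (ℓ∞) norm on `Fin n → ℂ`. -/
def linfnorm (v : Fin n → ℂ) : ℝ :=
  ⨆ k, ‖v k‖

/-- Hermitian inner product `x*y = ∑ₖ conj(xₖ) yₖ`. -/
def herm (x y : Fin n → ℂ) : ℂ :=
  ∑ k, (starRingEnd ℂ) (x k) * y k

/-- Distance up to a global phase: `d₂(x,y) = inf_θ ‖x e^{iθ} - y‖₂`. -/
def d2 (x y : Fin n → ℂ) : ℝ :=
  ⨅ θ : ℝ, l2norm (fun k => Complex.exp (θ * Complex.I) * x k - y k)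

/-- Sup-norm distance up to a global phase. -/
def dinf (x y : Fin n → ℂ) : ℝ :=
  ⨅ θ : ℝ, linfnorm (fun k => Complex.exp (θ * Complex.I) * x k - y k)

/-- ℓ² operator (spectral) norm of a matrix. -/
def opNorm (A : Matrix (Fin n) (Fin n) ℂ) : ℝ :=
  ⨆ u : {u : Fin n → ℂ // l2norm u = 1}, l2norm (A.mulVec u)

/-- Entrywise projection to the unit circle (on nonzero entries). -/
def proj (v : Fin n → ℂ) : Fin n → ℂ :=
  fun k => v k / (‖v k‖ : ℂ)

/-- The rank-one matrix `z z*`. -/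
def outer (z : Fin n → ℂ) : Matrix (Fin n) (Fin n) ℂ :=
  Matrix.of fun i j => z i * (starRingEnd ℂ) (z j)

/-- The operator `ℒ v = (z*v/n) z + (σ/n) W v`. -/
def Lop (z : Fin n → ℂ) (σ : ℝ) (W : Matrix (Fin n) (Fin n) ℂ) (v : Fin n → ℂ) : Fin n → ℂ :=
  (herm z v / (n : ℂ)) • z + (σ / (n : ℝ)) • W.mulVec v



def toE (v : Fin n → ℂ) : EuclideanSpace ℂ (Fin n) := WithLp.toLp 2 v

local notation "⟪" x ", " y "⟫" => @inner ℂ _ _ x y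

lemma l2norm_nonneg (v : Fin n → ℂ) : 0 ≤ l2norm v := Real.sqrt_nonneg _

lemma l2norm_eq (v : Fin n → ℂ) : l2norm v = ‖toE v‖ := by
  rw [EuclideanSpace.norm_eq]
  simp [l2norm, toE]

lemma herm_eq (x y : Fin n → ℂ) : herm x y = ⟪toE x, toE y⟫ := by
  simp [herm, toE, PiLp.inner_apply, RCLike.inner_apply, mul_comm]

lemma toE_combo (θ : ℝ) (x y : Fin n → ℂ) :
    toE (fun k => Complex.exp (θ * I) * x k - y k)
      = Complex.exp (θ * I) • toE x - toE y := rfl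

lemma d2_le (x y : Fin n → ℂ) (θ : ℝ) :
    d2 x y ≤ l2norm fun k => Complex.exp (θ * I) * x k - y k := by
  apply ciInf_le ⟨0, ?_⟩ θ
  rintro r ⟨θ', rfl⟩
  exact l2norm_nonneg _

lemma normsq_combo (θ : ℝ) (x y : Fin n → ℂ) :
    ‖Complex.exp (θ * I) • toE x - toE y‖ ^ 2
      = ‖toE x‖ ^ 2 + ‖toE y‖ ^ 2 - 2 * (Complex.exp (θ * I) * herm y x).re := by
  rw [norm_sub_sq (𝕜 := ℂ), inner_smul_left, norm_smul]
  have h1 : ‖Complex.exp (θ * I)‖ = 1 := by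
    rw [Complex.norm_exp_ofReal_mul_I]
  have h2 : ((starRingEnd ℂ) (Complex.exp (θ * I)) * ⟪toE x, toE y⟫).re
      = (Complex.exp (θ * I) * herm y x).re := by
    rw [herm_eq, ← inner_conj_symm (toE x) (toE y), ← map_mul, Complex.conj_re]
  rw [h1, one_mul, RCLike.re_to_complex, h2]
  ring

lemma phase_align (c : ℂ) :
    Complex.exp (↑(-c.arg) * I) * c = (‖c‖ : ℂ) := by
  nth_rewrite 2 [← Complex.norm_mul_exp_arg_mul_I c]
  rw [show Complex.exp (↑(-c.arg) * I) * ((‖c‖ : ℂ) * Complex.exp (↑c.arg * I))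
      = (‖c‖ : ℂ) * (Complex.exp (↑(-c.arg) * I) * Complex.exp (↑c.arg * I)) from by
    ring, ← Complex.exp_add]
  have h0 : (↑(-c.arg) * I + ↑c.arg * I : ℂ) = 0 := by push_cast; ring
  rw [h0, Complex.exp_zero, mul_one]

lemma d2_attained (x y : Fin n → ℂ) :
    ∃ θ : ℝ, Complex.exp (θ * I) * herm y x = (‖herm y x‖ : ℂ) ∧
      l2norm (fun k => Complex.exp (θ * I) * x k - y k) = d2 x y := by
  refine ⟨-(herm y x).arg, phase_align _, ?_⟩
  set c := herm y x with hc
  · refine le_antisymm (le_ciInf fun θ' => ?_) (d2_le x y _)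
    rw [l2norm_eq, l2norm_eq, toE_combo, toE_combo]
    have hre : (Complex.exp (↑(-c.arg) * I) * c).re = ‖c‖ := by
      rw [phase_align c, Complex.ofReal_re]
    have hre' : (Complex.exp (↑θ' * I) * c).re ≤ ‖c‖ := by
      calc (Complex.exp (↑θ' * I) * c).re ≤ ‖Complex.exp (↑θ' * I) * c‖ :=
        Complex.re_le_norm _
      _ = ‖c‖ := by rw [norm_mul, Complex.norm_exp_ofReal_mul_I, one_mul]
    have e1 := normsq_combo (-c.arg) x y
    have e2 := normsq_combo θ' x y
    rw [← hc] at e1 e2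
    nlinarith [norm_nonneg (Complex.exp (↑(-c.arg) * I) • toE x - toE y),
      norm_nonneg (Complex.exp (↑θ' * I) • toE x - toE y)]

lemma mulVec_l2_le (W : Matrix (Fin n) (Fin n) ℂ) (v : Fin n → ℂ) :
    l2norm (W.mulVec v) ≤ opNorm W * l2norm v := by
  classical
  let L : EuclideanSpace ℂ (Fin n) →ₗ[ℂ] EuclideanSpace ℂ (Fin n) :=
    { toFun := fun u => toE (W.mulVec u)
      map_add' := fun a b => by simp [toE, Matrix.mulVec_add]
      map_smul' := fun c a => by simp [toE, Matrix.mulVec_smul] }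
  set C := ‖LinearMap.toContinuousLinearMap L‖ with hC
  have hbdd : BddAbove (Set.range fun u : {u : Fin n → ℂ // l2norm u = 1} =>
      l2norm (W.mulVec ↑u)) := by
    refine ⟨C, ?_⟩
    rintro r ⟨u, rfl⟩
    dsimp only
    have h1 : l2norm (W.mulVec ↑u) = ‖LinearMap.toContinuousLinearMap L (toE ↑u)‖ := by
      rw [l2norm_eq]; rfl
    have h2 : ‖toE (↑u : Fin n → ℂ)‖ = 1 := by rw [← l2norm_eq]; exact u.2
    rw [h1]
    calc ‖LinearMap.toContinuousLinearMap L (toE ↑u)‖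
        ≤ C * ‖toE (↑u : Fin n → ℂ)‖ := (LinearMap.toContinuousLinearMap L).le_opNorm _
      _ = C := by rw [h2, mul_one]
  by_cases hv : l2norm v = 0
  · have hv0 : v = 0 := by
      have : toE v = 0 := by
        have := l2norm_eq v
        rw [hv] at this
        exact (norm_eq_zero.mp this.symm)
      exact congrArg WithLp.ofLp this
    rw [hv0]
    simp [Matrix.mulVec_zero, l2norm]
  · set r := l2norm v with hr
    have hr0 : 0 < r := lt_of_le_of_ne (l2norm_nonneg v) (Ne.symm hv)
    set u : Fin n → ℂ := ((r : ℂ))⁻¹ • v with hu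
    have hun : l2norm u = 1 := by
      rw [l2norm_eq]
      have : toE u = ((r : ℂ))⁻¹ • toE v := rfl
      rw [this, norm_smul, ← l2norm_eq, ← hr]
      simp [abs_of_pos hr0, inv_mul_cancel₀ (ne_of_gt hr0)]
    have hvu : v = (r : ℂ) • u := by
      rw [hu, smul_smul, mul_inv_cancel₀ (by exact_mod_cast ne_of_gt hr0), one_smul]
    have key : l2norm (W.mulVec u) ≤ opNorm W := le_ciSup hbdd ⟨u, hun⟩
    calc l2norm (W.mulVec v) = l2norm ((r : ℂ) • W.mulVec u) := by
          rw [hvu, Matrix.mulVec_smul]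
      _ = r * l2norm (W.mulVec u) := by
          have hte : toE ((r:ℂ) • W.mulVec u) = (r:ℂ) • toE (W.mulVec u) := rfl
          rw [l2norm_eq, hte, norm_smul, ← l2norm_eq]
          simp [abs_of_pos hr0]
      _ ≤ r * opNorm W := by
          exact mul_le_mul_of_nonneg_left key (le_of_lt hr0)
      _ = opNorm W * l2norm v := by rw [mul_comm, hr]


set_option maxHeartbeats 2000000 in
/-- the operator `ℒ v = (z*v/n) z + (σ/n) Wv` is Lipschitz with constant
`6ε + σ‖W‖₂/n` for `d₂` on norm-`√n` vectors within `d₂`-distance `ε√n` of `z`. -/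
theorem stmt10 (n : ℕ) (hn : 0 < n) (z : Fin n → ℂ) (hz : ∀ k, ‖z k‖ = 1)
    (W : Matrix (Fin n) (Fin n) ℂ) (hW : W.IsHermitian) (σ : ℝ) (hσ : 0 ≤ σ)
    (ε : ℝ) (hε0 : 0 < ε) (hε : ε < 1 / 2) (x y : Fin n → ℂ)
    (hxn : l2norm x = Real.sqrt n) (hyn : l2norm y = Real.sqrt n)
    (hxz : d2 x z ≤ ε * Real.sqrt n) (hyz : d2 y z ≤ ε * Real.sqrt n) :
    d2 (Lop z σ W x) (Lop z σ W y) ≤ (6 * ε + σ * opNorm W / n) * d2 x y := by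
  classical
  obtain ⟨θ, hθc, hθd⟩ := d2_attained x y
  obtain ⟨α, -, hαd⟩ := d2_attained x z
  obtain ⟨β, -, hβd⟩ := d2_attained y z
  set d := d2 x y with hd
  set v : Fin n → ℂ := fun k => Complex.exp (θ * I) * x k - y k with hv
  have hd0 : 0 ≤ d := hθd ▸ l2norm_nonneg v
  have hvE : toE v = Complex.exp (θ * I) • toE x - toE y := rfl
  have hvn : ‖toE v‖ = d := by rw [← l2norm_eq]; exact hθd
  have hn0 : (0:ℝ) < n := by exact_mod_cast hn
  have hXsq : ‖toE x‖ ^ 2 = n := by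
    rw [← l2norm_eq, hxn, Real.sq_sqrt hn0.le]
  have hYsq : ‖toE y‖ ^ 2 = n := by
    rw [← l2norm_eq, hyn, Real.sq_sqrt hn0.le]
  have hZ : l2norm z = Real.sqrt n := by
    simp [l2norm, hz]
  have habs : ∀ θ' : ℝ, ‖Complex.exp (↑θ' * I)‖ = 1 := fun θ' =>
    Complex.norm_exp_ofReal_mul_I θ'
  set c := herm y x with hc
  have hdsq : d ^ 2 = 2 * (n:ℝ) - 2 * ‖c‖ := by
    have h := normsq_combo θ x y
    rw [← hc, hθc, ← hvE, hvn, hXsq, hYsq, Complex.ofReal_re] at h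
    rw [h]; ring
  have hcle : ‖c‖ ≤ (n:ℝ) := by nlinarith [sq_nonneg d]
  -- |⟪x, v⟫| = n - |c|
  have hXX : ⟪toE x, toE x⟫ = (n:ℂ) := by
    rw [inner_self_eq_norm_sq_to_K, ← l2norm_eq, hxn]
    norm_cast
    rw [Real.sq_sqrt hn0.le]
    simp
  have ht : ⟪toE v, toE x⟫ = (starRingEnd ℂ) (Complex.exp (↑θ * I)) * (n:ℂ) - c := by
    rw [hvE, inner_sub_left, inner_smul_left, hXX, ← herm_eq, ← hc]
  have hXv : ‖⟪toE x, toE v⟫‖ = (n:ℝ) - ‖c‖ := by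
    have h1 : Complex.exp (↑θ * I) * ⟪toE v, toE x⟫ = (n:ℂ) - ↑(‖c‖) := by
      rw [ht, mul_sub, ← mul_assoc, Complex.mul_conj, Complex.normSq_eq_norm_sq, habs θ, hθc]
      norm_num
    have h2 := congrArg (‖·‖) h1
    rw [norm_mul, habs θ, one_mul] at h2
    have h3 : ‖⟪toE x, toE v⟫‖ = ‖⟪toE v, toE x⟫‖ := by
      rw [← inner_conj_symm (toE x) (toE v), Complex.norm_conj]
    rw [h3, h2, show (n:ℂ) - ↑(‖c‖) = (((n:ℝ) - ‖c‖ : ℝ) : ℂ) by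
      push_cast; ring, Complex.norm_of_nonneg (sub_nonneg.mpr hcle)]
  -- d ≤ 2 ε √n
  have h4 : ‖Complex.exp (↑α*I) • toE x - toE z‖ = d2 x z := by
    rw [← toE_combo, ← l2norm_eq]; exact hαd
  have h5 : ‖Complex.exp (↑β*I) • toE y - toE z‖ = d2 y z := by
    rw [← toE_combo, ← l2norm_eq]; exact hβd
  have hd2e : d ≤ 2 * ε * Real.sqrt n := by
    have h1 : d ≤ l2norm (fun k => Complex.exp (↑(α - β) * I) * x k - y k) := d2_le x y _
    have h2 : l2norm (fun k => Complex.exp (↑(α - β) * I) * x k - y k)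
        = ‖Complex.exp (↑α * I) • toE x - Complex.exp (↑β * I) • toE y‖ := by
      rw [l2norm_eq, toE_combo]
      have e0 : Complex.exp (↑(α-β)*I) • toE x - toE y
          = Complex.exp (↑(-β)*I) • (Complex.exp (↑α*I) • toE x - Complex.exp (↑β*I) • toE y) := by
        have e1 : (↑(-β)*I + ↑α*I : ℂ) = ↑(α-β)*I := by push_cast; ring
        have e2 : (↑(-β)*I + ↑β*I : ℂ) = 0 := by push_cast; ring
        rw [smul_sub, smul_smul, smul_smul, ← Complex.exp_add, ← Complex.exp_add, e1, e2,
          Complex.exp_zero, one_smul]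
      rw [e0, norm_smul, habs, one_mul]
    have h3 : ‖Complex.exp (↑α*I) • toE x - Complex.exp (↑β*I) • toE y‖
        ≤ ‖Complex.exp (↑α*I) • toE x - toE z‖ + ‖Complex.exp (↑β*I) • toE y - toE z‖ := by
      rw [show Complex.exp (↑α*I) • toE x - Complex.exp (↑β*I) • toE y
          = (Complex.exp (↑α*I) • toE x - toE z) - (Complex.exp (↑β*I) • toE y - toE z) by abel]
      exact norm_sub_le _ _
    rw [h2] at h1
    rw [h4, h5] at h3
    linarith
  -- |herm z v| ≤ 2 ε √n d
  have hZv : ‖herm z v‖ ≤ 2 * ε * Real.sqrt n * d := by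
    have hsplit : ⟪toE z, toE v⟫
        = ⟪toE z - Complex.exp (↑α*I) • toE x, toE v⟫
          + ⟪Complex.exp (↑α*I) • toE x, toE v⟫ := by
      rw [← inner_add_left]
      congr 1
      abel
    have h1 : ‖⟪toE z - Complex.exp (↑α*I) • toE x, toE v⟫‖
        ≤ (ε * Real.sqrt n) * d := by
      calc ‖⟪toE z - Complex.exp (↑α*I) • toE x, toE v⟫‖
          ≤ ‖toE z - Complex.exp (↑α*I) • toE x‖ * ‖toE v‖ := norm_inner_le_norm _ _
        _ = d2 x z * d := by rw [norm_sub_rev, h4, hvn]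
        _ ≤ (ε * Real.sqrt n) * d := mul_le_mul_of_nonneg_right hxz hd0
    have h2 : ‖⟪Complex.exp (↑α*I) • toE x, toE v⟫‖ ≤ ε * Real.sqrt n * d := by
      rw [inner_smul_left, norm_mul, Complex.norm_conj, habs α, one_mul, hXv]
      nlinarith [mul_le_mul_of_nonneg_right hd2e hd0, sq_nonneg d]
    rw [herm_eq, hsplit]
    calc ‖⟪toE z - Complex.exp (↑α*I) • toE x, toE v⟫
          + ⟪Complex.exp (↑α*I) • toE x, toE v⟫‖
        ≤ ‖⟪toE z - Complex.exp (↑α*I) • toE x, toE v⟫‖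
          + ‖⟪Complex.exp (↑α*I) • toE x, toE v⟫‖ := norm_add_le _ _
      _ ≤ 2 * ε * Real.sqrt n * d := by linarith
  have hWv : l2norm (W.mulVec v) ≤ opNorm W * d := by
    have h := mulVec_l2_le W v
    rwa [hθd] at h
  -- phase equivariance of Lop
  have hLop : (fun k => Complex.exp (↑θ*I) * (Lop z σ W x) k - (Lop z σ W y) k)
      = Lop z σ W v := by
    have hherm : herm z v = Complex.exp (↑θ*I) * herm z x - herm z y := by
      simp only [hv, herm]
      rw [Finset.mul_sum, ← Finset.sum_sub_distrib]
      apply Finset.sum_congr rfl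
      intros
      ring
    have hmv : W.mulVec v = fun k => Complex.exp (↑θ*I) * W.mulVec x k - W.mulVec y k := by
      have e : v = Complex.exp (↑θ*I) • x - y := rfl
      rw [e, Matrix.mulVec_sub, Matrix.mulVec_smul]
      rfl
    funext k
    simp only [Lop, Pi.add_apply, Pi.smul_apply, hherm, hmv, smul_eq_mul, Complex.real_smul]
    push_cast
    ring
  have hterm1 : ‖(herm z v / (n:ℂ)) • toE z‖ ≤ 2 * ε * d := by
    rw [norm_smul, ← l2norm_eq, hZ, norm_div, Complex.norm_natCast,
      div_mul_eq_mul_div, div_le_iff₀ hn0]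
    calc ‖herm z v‖ * Real.sqrt n
        ≤ (2 * ε * Real.sqrt n * d) * Real.sqrt n :=
          mul_le_mul_of_nonneg_right hZv (Real.sqrt_nonneg _)
      _ = 2 * ε * d * (Real.sqrt n * Real.sqrt n) := by ring
      _ = 2 * ε * d * n := by rw [Real.mul_self_sqrt hn0.le]
  have hterm2 : ‖(σ / (n:ℝ)) • toE (W.mulVec v)‖ ≤ σ * opNorm W / n * d := by
    rw [norm_smul, ← l2norm_eq, Real.norm_eq_abs, _root_.abs_of_nonneg (by positivity)]
    calc σ / n * l2norm (W.mulVec v) ≤ σ / n * (opNorm W * d) :=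
          mul_le_mul_of_nonneg_left hWv (by positivity)
      _ = σ * opNorm W / n * d := by ring
  calc d2 (Lop z σ W x) (Lop z σ W y)
      ≤ l2norm (fun k => Complex.exp (↑θ*I) * (Lop z σ W x) k - (Lop z σ W y) k) :=
        d2_le _ _ θ
    _ = l2norm (Lop z σ W v) := by rw [hLop]
    _ = ‖(herm z v / (n:ℂ)) • toE z + (σ / (n:ℝ)) • toE (W.mulVec v)‖ := by
        rw [l2norm_eq]; rfl
    _ ≤ ‖(herm z v / (n:ℂ)) • toE z‖ + ‖(σ / (n:ℝ)) • toE (W.mulVec v)‖ := norm_add_le _ _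
    _ ≤ 2 * ε * d + σ * opNorm W / n * d := add_le_add hterm1 hterm2
    _ ≤ (6 * ε + σ * opNorm W / n) * d := by nlinarith

end PhaseSync
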